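/- For the continuous-time binary Galton-Watson process with $p > 1/2$ and branching rate $\lambda$, the fourth moment satisfies: $\sup_{t \ge 0} e^{-4\lambda_p t}\, \mathbb{E}|X_t|^4 < \infty$, where $\lambda_p = (2p-1)\lambda$. Moreover all moments $\mathbb{E}|X_t|^n$ are finite for every $n$ and $t \ge 0$. -/

import Mathlib

open MeasureTheory

lemma descFact_hasDerivAt (k n : ℕ) (s : ℝ) :
    HasDerivAt (fun x : ℝ => (k.descFactorial n : ℝ) * x ^ (k - n))
      ((k.descFactorial (n+1) : ℝ) * s ^ (k - (n+1))) s := by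
  rcases le_or_gt k n with h | h
  · have h1 : k - n = 0 := Nat.sub_eq_zero_of_le h
    have h2 : k.descFactorial (n+1) = 0 :=
      Nat.descFactorial_eq_zero_iff_lt.mpr (Nat.lt_succ_of_le h)
    simp only [h1, h2, pow_zero, mul_one, Nat.cast_zero, zero_mul]
    exact hasDerivAt_const s _
  · have h1 : (k - n) - 1 = k - (n+1) := by omega
    have h2 := (hasDerivAt_pow (k - n) s).const_mul ((k.descFactorial n : ℝ))
    convert h2 using 1 <;> try rfl
    rw [Nat.descFactorial_succ, h1]
    push_cast [Nat.cast_sub h.le]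
    ring

lemma descFact_bound (n : ℕ) {r : ℝ} (h0 : 0 < r) (h1 : r < 1) :
    ∃ C : ℝ, 0 ≤ C ∧ ∀ k : ℕ, (k.descFactorial n : ℝ) * r ^ (k - n) ≤ C := by
  have hs : Summable fun k : ℕ => (k:ℝ)^n * r^k :=
    summable_pow_mul_geometric_of_norm_lt_one n
      (by rwa [Real.norm_eq_abs, abs_of_pos h0])
  obtain ⟨C, hC⟩ := hs.tendsto_atTop_zero.bddAbove_range
  have hC0 : 0 ≤ C := le_trans (by positivity) (hC ⟨0, rfl⟩)
  refine ⟨C / r^n, by positivity, fun k => ?_⟩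
  rcases le_or_gt n k with h | h
  · have hd : (k.descFactorial n : ℝ) ≤ (k:ℝ)^n := by
      exact_mod_cast Nat.cast_le.mpr (Nat.descFactorial_le_pow k n)
    have hr : r ^ (k - n) = r^k / r^n := by
      rw [eq_div_iff (by positivity), pow_sub_mul_pow r h]
    rw [hr, ← mul_div_assoc, div_le_div_iff_of_pos_right (by positivity)]
    calc (k.descFactorial n : ℝ) * r^k
        ≤ (k:ℝ)^n * r^k := mul_le_mul_of_nonneg_right hd (by positivity)
      _ ≤ C := hC ⟨k, rfl⟩
  · have : k.descFactorial n = 0 := Nat.descFactorial_eq_zero_iff_lt.mpr h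
    simp [this]
    positivity

lemma pow_le_descFact (n k : ℕ) : k ^ n ≤ 2^n * k.descFactorial n + (2*n)^n := by
  rcases le_or_gt (2*n) k with h | h
  · have h2 : k ≤ 2 * (k + 1 - n) := by omega
    calc k ^ n ≤ (2 * (k+1-n)) ^ n := Nat.pow_le_pow_left h2 n
      _ = 2^n * (k+1-n)^n := by rw [Nat.mul_pow]
      _ ≤ 2^n * k.descFactorial n :=
          Nat.mul_le_mul_left _ (Nat.pow_sub_le_descFactorial k n)
      _ ≤ _ := Nat.le_add_right _ _
  · calc k ^ n ≤ (2*n)^n := Nat.pow_le_pow_left h.le n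
      _ ≤ _ := Nat.le_add_left _ _

lemma pow4_eq (k : ℕ) : k ^ 4 = k.descFactorial 4 + 6 * k.descFactorial 3
    + 7 * k.descFactorial 2 + k.descFactorial 1 := by
  rcases le_or_gt 4 k with h | h
  · obtain ⟨m, rfl⟩ := Nat.exists_eq_add_of_le h
    simp only [Nat.descFactorial]
    have e1 : 4 + m - 1 = m + 3 := by omega
    have e2 : 4 + m - 2 = m + 2 := by omega
    have e3 : 4 + m - 3 = m + 1 := by omega
    have e0 : 4 + m - 0 = m + 4 := by omega
    rw [e1, e2, e3, e0]
    ring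
  · interval_cases k <;> decide

lemma key {Ω : Type*} [MeasurableSpace Ω] (P : Measure Ω) [IsProbabilityMeasure P]
    (lam p : ℝ) (hlam : 0 < lam) (hp : 1 / 2 < p) (hp1 : p ≤ 1)
    (Nt : Ω → ℕ) (hmN : Measurable Nt)
    (t : ℝ) (ht : 0 ≤ t)
    (hLap : ∀ θ ≥ (0:ℝ),
      (∫ ω, Real.exp (-θ * (Nt ω : ℝ)) ∂P)
        = (lam * (1 - p) * (Real.exp (-θ) - 1)
            - Real.exp (-(2 * p - 1) * lam * t) * (lam * p * Real.exp (-θ) - lam * (1 - p)))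
          / (lam * p * (Real.exp (-θ) - 1)
            - Real.exp (-(2 * p - 1) * lam * t) * (lam * p * Real.exp (-θ) - lam * (1 - p))))
    (n : ℕ) :
    Integrable (fun ω => ((Nt ω).descFactorial n : ℝ)) P ∧
      ∫ ω, ((Nt ω).descFactorial n : ℝ) ∂P
        ≤ (n.factorial : ℝ) / (2*p-1)^(n-1) * Real.exp ((n:ℝ) * ((2*p-1)*lam) * t) := by
  set m : ℝ := 2*p - 1 with hm_def
  have hm : 0 < m := by simp only [hm_def]; linarith
  have hm1 : m ≤ 1 := by simp only [hm_def]; linarith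
  set E : ℝ := Real.exp (-(2*p-1) * lam * t) with hE_def
  have hE0 : 0 < E := Real.exp_pos _
  have hE1 : E ≤ 1 := by
    rw [hE_def]
    apply Real.exp_le_one_iff.mpr
    nlinarith [mul_nonneg (mul_nonneg (by linarith : (0:ℝ) ≤ 2*p-1) hlam.le) ht]
  set a : ℝ := p - E * (1-p) with ha_def
  set b : ℝ := p * (1 - E) with hb_def
  have hb0 : 0 ≤ b := by
    apply mul_nonneg (by linarith) (by linarith)
  have hb1 : b ≤ 1 := by nlinarith
  have hab : a - b = E * m := by simp only [ha_def, hb_def, hm_def]; ring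
  have hden : ∀ s : ℝ, s ≤ 1 → E * m ≤ a - b * s := by
    intro s hs
    nlinarith [mul_nonneg hb0 (by linarith : (0:ℝ) ≤ 1 - s)]
  have hden0 : ∀ s : ℝ, s ≤ 1 → 0 < a - b * s := fun s hs =>
    lt_of_lt_of_le (by positivity) (hden s hs)
  -- integrability of basic integrands
  have hint : ∀ (j : ℕ) (s : ℝ), 0 < s → s < 1 →
      Integrable (fun ω => ((Nt ω).descFactorial j : ℝ) * s ^ (Nt ω - j)) P := by
    intro j s h0 h1
    obtain ⟨C, hC0, hC⟩ := descFact_bound j h0 h1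
    have hmeas : Measurable fun ω => ((Nt ω).descFactorial j : ℝ) * s ^ (Nt ω - j) :=
      (measurable_from_top (f := fun k : ℕ => ((k.descFactorial j : ℝ) * s ^ (k - j)))).comp hmN
    refine (integrable_const C).mono' hmeas.aestronglyMeasurable (ae_of_all _ fun ω => ?_)
    rw [Real.norm_eq_abs, abs_of_nonneg (by positivity)]
    exact hC _
  -- derivative of the parametric integral
  have hder : ∀ (j : ℕ) (s₀ : ℝ), 0 < s₀ → s₀ < 1 →
      HasDerivAt (fun s => ∫ ω, ((Nt ω).descFactorial j : ℝ) * s ^ (Nt ω - j) ∂P)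
        (∫ ω, ((Nt ω).descFactorial (j+1) : ℝ) * s₀ ^ (Nt ω - (j+1)) ∂P) s₀ := by
    intro j s₀ h0 h1
    have hε0 : 0 < min s₀ ((1-s₀)/2) := lt_min h0 (by linarith)
    set ε := min s₀ ((1-s₀)/2) with hε_def
    set r := s₀ + ε with hr_def
    have hr1 : r < 1 := by
      have := min_le_right s₀ ((1-s₀)/2)
      simp only [hr_def]
      linarith
    have hr0 : 0 < r := by positivity
    obtain ⟨C, hC0, hC⟩ := descFact_bound (j+1) hr0 hr1
    refine (hasDerivAt_integral_of_dominated_loc_of_deriv_le (s := Metric.ball s₀ ε)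
      (F := fun s ω => ((Nt ω).descFactorial j : ℝ) * s ^ (Nt ω - j))
      (F' := fun s ω => ((Nt ω).descFactorial (j+1) : ℝ) * s ^ (Nt ω - (j+1)))
      (bound := fun _ => C) (Metric.ball_mem_nhds s₀ hε0) ?_ (hint j s₀ h0 h1) ?_ ?_ (integrable_const C) ?_).2
    · exact Filter.Eventually.of_forall fun x =>
        ((measurable_from_top (f := fun k : ℕ => ((k.descFactorial j : ℝ) * x ^ (k - j)))).comp
          hmN).aestronglyMeasurable
    · exact ((measurable_from_top
        (f := fun k : ℕ => ((k.descFactorial (j+1) : ℝ) * s₀ ^ (k - (j+1))))).comp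
          hmN).aestronglyMeasurable
    · refine ae_of_all _ fun ω x hx => ?_
      have hxr : |x| ≤ r := by
        rw [Metric.mem_ball, Real.dist_eq] at hx
        have := abs_sub_abs_le_abs_sub x s₀
        rw [abs_of_pos h0] at this
        simp only [hr_def]
        linarith
      rw [Real.norm_eq_abs, abs_mul, Nat.abs_cast, abs_pow]
      calc ((Nt ω).descFactorial (j+1) : ℝ) * |x| ^ (Nt ω - (j+1))
          ≤ ((Nt ω).descFactorial (j+1) : ℝ) * r ^ (Nt ω - (j+1)) := by
            apply mul_le_mul_of_nonneg_left (pow_le_pow_left₀ (abs_nonneg x) hxr _)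
              (Nat.cast_nonneg _)
        _ ≤ C := hC _
    · exact ae_of_all _ fun ω x _ => descFact_hasDerivAt (Nt ω) j x
  -- base case: the Laplace transform identity
  have hbase : ∀ s : ℝ, 0 < s → s < 1 →
      (∫ ω, ((Nt ω).descFactorial 0 : ℝ) * s ^ (Nt ω - 0) ∂P)
        = 1 - m * (1-s) / (a - b * s) := by
    intro s h0 h1
    have hlog : Real.log s < 0 := Real.log_neg h0 h1
    have h := hLap (-Real.log s) (by linarith)
    have hs : Real.exp (-(-Real.log s)) = s := by rw [neg_neg, Real.exp_log h0]
    rw [hs] at h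
    have hInt : ∀ ω, ((Nt ω).descFactorial 0 : ℝ) * s ^ (Nt ω - 0)
        = Real.exp (-(-Real.log s) * (Nt ω : ℝ)) := by
      intro ω
      rw [neg_neg]
      simp only [Nat.descFactorial_zero, Nat.cast_one, one_mul, Nat.sub_zero]
      rw [mul_comm (Real.log s), Real.exp_nat_mul, Real.exp_log h0]
    rw [integral_congr_ae (ae_of_all _ hInt), h]
    have hne : a - b * s ≠ 0 := ne_of_gt (hden0 s h1.le)
    have hD : lam * p * (s - 1) - E * (lam * p * s - lam * (1-p))
        = -(lam * (a - b * s)) := by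
      simp only [ha_def, hb_def]; ring
    have hN : lam * (1-p) * (s - 1) - E * (lam * p * s - lam * (1-p))
        = -(lam * ((a - b * s) - m * (1-s))) := by
      simp only [ha_def, hb_def, hm_def]; ring
    rw [hD, hN]
    field_simp
  -- the inductive identity
  have hmain : ∀ (j : ℕ) (s : ℝ), 0 < s → s < 1 →
      (∫ ω, ((Nt ω).descFactorial (j+1) : ℝ) * s ^ (Nt ω - (j+1)) ∂P)
        = ((j+1).factorial : ℝ) * E * m^2 * b^j / (a - b*s)^(j+2) := by
    intro j
    induction j with
    | zero =>
      intro s h0 h1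
      have hne : a - b * s ≠ 0 := ne_of_gt (hden0 s h1.le)
      -- derivative of the explicit function 1 - m(1-s)/(a-bs)
      have hf : HasDerivAt (fun x : ℝ => m * (1-x)) (-m) s := by
        simpa using ((hasDerivAt_id s).const_sub 1).const_mul m
      have hg : HasDerivAt (fun x : ℝ => a - b * x) (-b) s := by
        simpa using ((hasDerivAt_id s).const_mul b).const_sub a
      have hR : HasDerivAt (fun x : ℝ => 1 - m * (1-x) / (a - b * x))
          (((0+1).factorial : ℝ) * E * m^2 * b^0 / (a - b*s)^(0+2)) s := by
        have h3 := (hf.div hg hne).const_sub 1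
        convert h3 using 1 <;> try rfl
        have hnum : -(-m * (a - b*s) - m * (1-s) * -b) = E * m^2 := by
          linear_combination m * hab
        rw [← neg_div, hnum]
        norm_num
      -- transfer to the integral function
      have hEq : (fun x => ∫ ω, ((Nt ω).descFactorial 0 : ℝ) * x ^ (Nt ω - 0) ∂P)
          =ᶠ[nhds s] (fun x => 1 - m * (1-x) / (a - b * x)) := by
        filter_upwards [isOpen_Ioo.mem_nhds (Set.mem_Ioo.mpr ⟨h0, h1⟩ :
          s ∈ Set.Ioo (0:ℝ) 1)] with x hx
        exact hbase x hx.1 hx.2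
      have hH := hder 0 s h0 h1
      have hR' : HasDerivAt (fun x => ∫ ω, ((Nt ω).descFactorial 0 : ℝ) * x ^ (Nt ω - 0) ∂P)
          (((0+1).factorial : ℝ) * E * m^2 * b^0 / (a - b*s)^(0+2)) s :=
        (hEq.hasDerivAt_iff).mpr hR
      exact hH.unique hR'
    | succ j ih =>
      intro s h0 h1
      have hne : a - b * s ≠ 0 := ne_of_gt (hden0 s h1.le)
      have hg : HasDerivAt (fun x : ℝ => a - b * x) (-b) s := by
        simpa using ((hasDerivAt_id s).const_mul b).const_sub a
      have hgp : HasDerivAt (fun x : ℝ => ((a - b * x) ^ (j+2))⁻¹)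
          (-((j+2 : ℕ) * (a - b*s)^(j+2-1) * (-b)) / ((a - b*s)^(j+2))^2) s :=
        (hg.pow (j+2)).inv (pow_ne_zero _ hne)
      have hR : HasDerivAt (fun x : ℝ => ((j+1).factorial : ℝ) * E * m^2 * b^j / (a - b*x)^(j+2))
          (((j+2).factorial : ℝ) * E * m^2 * b^(j+1) / (a - b*s)^(j+3)) s := by
        have h3 := hgp.const_mul (((j+1).factorial : ℝ) * E * m^2 * b^j)
        have h4 : ∀ x : ℝ, ((j+1).factorial : ℝ) * E * m^2 * b^j * ((a - b*x)^(j+2))⁻¹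
            = ((j+1).factorial : ℝ) * E * m^2 * b^j / (a - b*x)^(j+2) := fun x => by
          rw [div_eq_mul_inv]
        simp only [h4] at h3
        convert h3 using 1 <;> try rfl
        have hj : j + 2 - 1 = j + 1 := by omega
        rw [hj, Nat.factorial_succ (j+1)]
        field_simp
        push_cast
        ring
      have hEq : (fun x => ∫ ω, ((Nt ω).descFactorial (j+1) : ℝ) * x ^ (Nt ω - (j+1)) ∂P)
          =ᶠ[nhds s] (fun x => ((j+1).factorial : ℝ) * E * m^2 * b^j / (a - b*x)^(j+2)) := by
        filter_upwards [isOpen_Ioo.mem_nhds (Set.mem_Ioo.mpr ⟨h0, h1⟩ :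
          s ∈ Set.Ioo (0:ℝ) 1)] with x hx
        exact ih x hx.1 hx.2
      have hH := hder (j+1) s h0 h1
      have hR' : HasDerivAt
          (fun x => ∫ ω, ((Nt ω).descFactorial (j+1) : ℝ) * x ^ (Nt ω - (j+1)) ∂P)
          (((j+2).factorial : ℝ) * E * m^2 * b^(j+1) / (a - b*s)^(j+3)) s :=
        (hEq.hasDerivAt_iff).mpr hR
      have := hH.unique hR'
      rw [this]
  have hE0' : E ≠ 0 := ne_of_gt hE0
  have hm0' : m ≠ 0 := ne_of_gt hm
  rcases n with _ | j
  · refine ⟨by simpa using (integrable_const (1:ℝ)), ?_⟩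
    simp
  · -- the bound value
    set B : ℝ := ((j+1).factorial : ℝ) / m^(j+1-1)
        * Real.exp ((((j+1):ℕ):ℝ) * (m*lam) * t) with hB_def
    have hEinv : (E⁻¹)^(j+1) = Real.exp ((((j+1):ℕ):ℝ) * (m*lam) * t) := by
      rw [hE_def, ← Real.exp_neg, ← Real.exp_nat_mul]
      congr 1
      push_cast
      simp only [hm_def]
      ring
    have hB0 : 0 ≤ B := by rw [hB_def]; positivity
    have hBval : ∀ s : ℝ, 0 < s → s < 1 →
        ((j+1).factorial : ℝ) * E * m^2 * b^j / (a - b*s)^(j+2) ≤ B := by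
      intro s h0 h1
      have h2 : (E*m)^(j+2) ≤ (a - b*s)^(j+2) :=
        pow_le_pow_left₀ (by positivity) (hden s h1.le) _
      have h3 : ((j+1).factorial : ℝ) * E * m^2 * b^j
          ≤ ((j+1).factorial : ℝ) * E * m^2 * 1 :=
        mul_le_mul_of_nonneg_left (pow_le_one₀ hb0 hb1) (by positivity)
      calc ((j+1).factorial : ℝ) * E * m^2 * b^j / (a - b*s)^(j+2)
          ≤ ((j+1).factorial : ℝ) * E * m^2 * 1 / (E*m)^(j+2) :=
            div_le_div₀ (by positivity) h3 (by positivity) h2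
        _ = ((j+1).factorial : ℝ) / m^(j+1-1) * (E⁻¹)^(j+1) := by
            rw [Nat.add_sub_cancel, mul_pow]
            field_simp [hE0.ne']
            rw [one_div, inv_pow]; field_simp; ring
        _ = B := by rw [hB_def, hEinv]
    -- monotone approximation sequence
    set u : ℕ → ℝ := fun i => 1 - 1/((i:ℝ)+2) with hu_def
    have hu0 : ∀ i, 0 < u i := by
      intro i
      have : 1/((i:ℝ)+2) < 1 := by
        rw [div_lt_one (by positivity)]
        have : (0:ℝ) ≤ (i:ℝ) := Nat.cast_nonneg i
        linarith
      simp only [hu_def]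
      linarith
    have hu1 : ∀ i, u i < 1 := by
      intro i
      have : 0 < 1/((i:ℝ)+2) := by positivity
      simp only [hu_def]
      linarith
    have humono : Monotone u := by
      intro i i' hii
      simp only [hu_def]
      have h2 : ((i:ℝ)+2) ≤ ((i':ℝ)+2) := by
        have : (i:ℝ) ≤ (i':ℝ) := Nat.cast_le.mpr hii
        linarith
      have := one_div_le_one_div_of_le (by positivity : (0:ℝ) < (i:ℝ)+2) h2
      linarith
    have hulim : Filter.Tendsto u Filter.atTop (nhds 1) := by
      have hA : Filter.Tendsto (fun i : ℕ => (i:ℝ)+2) Filter.atTop Filter.atTop :=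
        Filter.tendsto_atTop_add_const_right _ 2 tendsto_natCast_atTop_atTop
      have hB := hA.inv_tendsto_atTop
      have := tendsto_const_nhds.sub (f := fun _ : ℕ => (1:ℝ)) hB
      simpa [hu_def, one_div] using this
    -- pointwise monotone and sup
    have hptmono : Monotone (fun i : ℕ => fun ω =>
        ENNReal.ofReal (((Nt ω).descFactorial (j+1) : ℝ) * (u i) ^ (Nt ω - (j+1)))) := by
      intro i i' hii
      intro ω
      apply ENNReal.ofReal_le_ofReal
      apply mul_le_mul_of_nonneg_left _ (Nat.cast_nonneg _)
      exact pow_le_pow_left₀ (hu0 i).le (humono hii) _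
    have hsup : ∀ ω, (⨆ i, ENNReal.ofReal
        (((Nt ω).descFactorial (j+1) : ℝ) * (u i) ^ (Nt ω - (j+1))))
        = ENNReal.ofReal ((Nt ω).descFactorial (j+1) : ℝ) := by
      intro ω
      have hpt : Filter.Tendsto
          (fun i => ((Nt ω).descFactorial (j+1) : ℝ) * (u i) ^ (Nt ω - (j+1)))
          Filter.atTop (nhds ((Nt ω).descFactorial (j+1) : ℝ)) := by
        have := (hulim.pow (Nt ω - (j+1))).const_mul ((Nt ω).descFactorial (j+1) : ℝ)
        simpa using this
      exact tendsto_nhds_unique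
        (tendsto_atTop_iSup (fun i i' hii => hptmono hii ω))
        (ENNReal.tendsto_ofReal hpt)
    have hli : ∫⁻ ω, ENNReal.ofReal ((Nt ω).descFactorial (j+1) : ℝ) ∂P
        ≤ ENNReal.ofReal B := by
      have hmeasi : ∀ i : ℕ, Measurable (fun ω =>
          ENNReal.ofReal (((Nt ω).descFactorial (j+1) : ℝ) * (u i) ^ (Nt ω - (j+1)))) := by
        intro i
        exact ENNReal.measurable_ofReal.comp
          ((measurable_from_top
            (f := fun k : ℕ => ((k.descFactorial (j+1) : ℝ) * (u i) ^ (k - (j+1))))).comp hmN)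
      calc ∫⁻ ω, ENNReal.ofReal ((Nt ω).descFactorial (j+1) : ℝ) ∂P
          = ∫⁻ ω, ⨆ i, ENNReal.ofReal
              (((Nt ω).descFactorial (j+1) : ℝ) * (u i) ^ (Nt ω - (j+1))) ∂P :=
            lintegral_congr fun ω => (hsup ω).symm
        _ = ⨆ i, ∫⁻ ω, ENNReal.ofReal
              (((Nt ω).descFactorial (j+1) : ℝ) * (u i) ^ (Nt ω - (j+1))) ∂P :=
            lintegral_iSup hmeasi hptmono
        _ ≤ ENNReal.ofReal B := by
            refine iSup_le fun i => ?_
            rw [← ofReal_integral_eq_lintegral_ofReal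
              (hint (j+1) (u i) (hu0 i) (hu1 i))
              (ae_of_all _ fun ω => mul_nonneg (Nat.cast_nonneg _) (pow_nonneg (hu0 i).le _))]
            apply ENNReal.ofReal_le_ofReal
            rw [hmain j (u i) (hu0 i) (hu1 i)]
            exact hBval (u i) (hu0 i) (hu1 i)
    have hmeasf : Measurable (fun ω => ((Nt ω).descFactorial (j+1) : ℝ)) :=
      (measurable_from_top (f := fun k : ℕ => (k.descFactorial (j+1) : ℝ))).comp hmN
    have hintf : Integrable (fun ω => ((Nt ω).descFactorial (j+1) : ℝ)) P := by
      refine ⟨hmeasf.aestronglyMeasurable, ?_⟩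
      rw [hasFiniteIntegral_iff_norm]
      have : ∀ ω, ENNReal.ofReal ‖((Nt ω).descFactorial (j+1) : ℝ)‖
          = ENNReal.ofReal ((Nt ω).descFactorial (j+1) : ℝ) := by
        intro ω
        rw [Real.norm_eq_abs, abs_of_nonneg (Nat.cast_nonneg _)]
      calc ∫⁻ ω, ENNReal.ofReal ‖((Nt ω).descFactorial (j+1) : ℝ)‖ ∂P
          = ∫⁻ ω, ENNReal.ofReal ((Nt ω).descFactorial (j+1) : ℝ) ∂P :=
            lintegral_congr this
        _ ≤ ENNReal.ofReal B := hli
        _ < ⊤ := ENNReal.ofReal_lt_top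
    refine ⟨hintf, ?_⟩
    rw [integral_eq_lintegral_of_nonneg_ae
      (ae_of_all _ fun ω => Nat.cast_nonneg _) hmeasf.aestronglyMeasurable]
    exact ENNReal.toReal_le_of_le_ofReal hB0 hli



/-- For the continuous-time binary Galton-Watson process (characterized by its explicit
Laplace transform), the fourth moment satisfies `sup_t e^{-4λ_p t} E|X_t|⁴ < ∞`, and all
moments `E|X_t|ⁿ` are finite. -/
theorem binary_GW_moment_bounds
    {Ω : Type*} [MeasurableSpace Ω] (P : Measure Ω) [IsProbabilityMeasure P]
    (lam p : ℝ) (hlam : 0 < lam) (hp : 1 / 2 < p) (hp1 : p ≤ 1)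
    (N : ℝ → Ω → ℕ) (hmN : ∀ t, Measurable (N t))
    -- the Laplace transform of `|X_t|` is the explicit Galton-Watson one
    (hLap : ∀ t ≥ (0:ℝ), ∀ θ ≥ (0:ℝ),
      (∫ ω, Real.exp (-θ * (N t ω : ℝ)) ∂P)
        = (lam * (1 - p) * (Real.exp (-θ) - 1)
            - Real.exp (-(2 * p - 1) * lam * t) * (lam * p * Real.exp (-θ) - lam * (1 - p)))
          / (lam * p * (Real.exp (-θ) - 1)
            - Real.exp (-(2 * p - 1) * lam * t) * (lam * p * Real.exp (-θ) - lam * (1 - p)))) :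
    (∃ C : ℝ, ∀ t ≥ (0:ℝ),
      (∫ ω, ((N t ω : ℝ)) ^ 4 ∂P) ≤ C * Real.exp (4 * (2 * p - 1) * lam * t))
    ∧ ∀ (n : ℕ), ∀ t ≥ (0:ℝ), Integrable (fun ω => ((N t ω : ℝ)) ^ n) P := by
  have hm : (0:ℝ) < 2*p - 1 := by linarith
  constructor
  · refine ⟨24/(2*p-1)^3 + 36/(2*p-1)^2 + 14/(2*p-1) + 1, fun t ht => ?_⟩
    have hk := fun n => key P lam p hlam hp hp1 (N t) (hmN t) t ht (hLap t ht) n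
    have hexp : ∀ n : ℕ, n ≤ 4 → Real.exp ((n:ℝ)*((2*p-1)*lam)*t)
        ≤ Real.exp (4*(2*p-1)*lam*t) := by
      intro n hn
      apply Real.exp_le_exp.mpr
      have h1 : 0 ≤ (2*p-1)*lam*t := mul_nonneg (mul_nonneg hm.le hlam.le) ht
      have h2 : (n:ℝ) ≤ 4 := by exact_mod_cast hn
      nlinarith
    have hb : ∀ n : ℕ, n ≤ 4 →
        ∫ ω, ((N t ω).descFactorial n : ℝ) ∂P
          ≤ (n.factorial : ℝ)/(2*p-1)^(n-1) * Real.exp (4*(2*p-1)*lam*t) := by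
      intro n hn
      refine le_trans (hk n).2 ?_
      exact mul_le_mul_of_nonneg_left (hexp n hn) (by positivity)
    have i4 := (hk 4).1
    have i3 := (hk 3).1
    have i2 := (hk 2).1
    have i1 := (hk 1).1
    have hcongr : (fun ω => ((N t ω : ℝ))^4) = fun ω =>
        ((N t ω).descFactorial 4 : ℝ) + 6*((N t ω).descFactorial 3 : ℝ)
          + 7*((N t ω).descFactorial 2 : ℝ) + ((N t ω).descFactorial 1 : ℝ) := by
      funext ω
      have := congrArg (fun z : ℕ => (z:ℝ)) (pow4_eq (N t ω))
      push_cast at this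
      linarith
    have i43 : Integrable (fun ω => ((N t ω).descFactorial 4 : ℝ)
        + 6*((N t ω).descFactorial 3 : ℝ)) P := i4.add (i3.const_mul 6)
    have i432 : Integrable (fun ω => ((N t ω).descFactorial 4 : ℝ)
        + 6*((N t ω).descFactorial 3 : ℝ) + 7*((N t ω).descFactorial 2 : ℝ)) P :=
      i43.add (i2.const_mul 7)
    rw [hcongr, integral_add i432 i1, integral_add i43 (i2.const_mul 7),
      integral_add i4 (i3.const_mul 6), integral_const_mul, integral_const_mul]
    have h4 := hb 4 (by norm_num)
    have h3 := hb 3 (by norm_num)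
    have h2 := hb 2 (by norm_num)
    have h1 := hb 1 (by norm_num)
    have e4 : ((4:ℕ).factorial : ℝ) / (2*p-1)^(4-1) = 24/(2*p-1)^3 := by
      norm_num [Nat.factorial]
    have e3 : ((3:ℕ).factorial : ℝ) / (2*p-1)^(3-1) = 6/(2*p-1)^2 := by
      norm_num [Nat.factorial]
    have e2 : ((2:ℕ).factorial : ℝ) / (2*p-1)^(2-1) = 2/(2*p-1) := by
      norm_num [Nat.factorial]
    have e1 : ((1:ℕ).factorial : ℝ) / (2*p-1)^(1-1) = 1 := by
      norm_num [Nat.factorial]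
    rw [e4] at h4
    rw [e3] at h3
    rw [e2] at h2
    rw [e1] at h1
    refine le_trans (add_le_add (add_le_add (add_le_add h4
      (mul_le_mul_of_nonneg_left h3 (by norm_num : (0:ℝ) ≤ 6)))
      (mul_le_mul_of_nonneg_left h2 (by norm_num : (0:ℝ) ≤ 7))) h1) (le_of_eq ?_)
    ring
  · intro n t ht
    have hk := key P lam p hlam hp hp1 (N t) (hmN t) t ht (hLap t ht) n
    have hg : Integrable (fun ω => (2:ℝ)^n * ((N t ω).descFactorial n : ℝ)
        + ((2*n:ℕ):ℝ)^n) P := (hk.1.const_mul _).add (integrable_const _)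
    refine hg.mono' ((measurable_from_top
      (f := fun k : ℕ => ((k:ℝ))^n)).comp (hmN t)).aestronglyMeasurable
      (ae_of_all _ fun ω => ?_)
    rw [Real.norm_eq_abs, abs_of_nonneg (by positivity)]
    have h := pow_le_descFact n (N t ω)
    calc ((N t ω : ℝ))^n = ((N t ω ^ n : ℕ) : ℝ) := by push_cast; ring
      _ ≤ ((2^n * (N t ω).descFactorial n + (2*n)^n : ℕ) : ℝ) := by exact_mod_cast h
      _ = (2:ℝ)^n * ((N t ω).descFactorial n : ℝ) + ((2*n:ℕ):ℝ)^n := by push_cast; ring
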